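/- For all χ∈F, the element p(χ) − (−1)^{|χ|}∏_{a∈A}(h⊗a)^{(χ(a))} of U(sl₂⊗A) is a ℂ-linear combination of products of fewer than |χ| elements of the set {h⊗a : a∈A}; that is, p(χ) = (−1)^{|χ|}∏_{a∈A}(h⊗a)^{(χ(a))} plus an element of the subalgebra generated by {h⊗a : a∈A} of degree less than |χ|. -/

import Mathlib

open scoped TensorProduct
open Finsupp
open scoped Classical

noncomputable section

namespace MapAlgebra

/-- the divided power `u^{(r)} = u^r / r!` in a `ℂ`-algebra. -/
def dp {S : Type*} [Ring S] [Algebra ℂ S] (u : S) (r : ℕ) : S :=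
  (r.factorial : ℂ)⁻¹ • u ^ r

variable {A : Type*} [CommRing A] [Algebra ℂ A]

/-- `|ψ| = Σ_a ψ(a)` for a multiset `ψ` of elements of `A`. -/
def wt (ψ : A →₀ ℕ) : ℕ := ψ.sum fun _ n => n

/-- `π(ψ) = ∏_a a^{ψ(a)}`. -/
def piF (ψ : A →₀ ℕ) : A := ψ.prod fun a n => a ^ n

/-- `m(ψ) = |ψ|! / ∏_a ψ(a)!`. -/
def mF (ψ : A →₀ ℕ) : ℕ := Finsupp.multinomial ψ

variable {L : Type*} [LieRing L] [LieAlgebra ℂ L]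

instance : LieAlgebra ℂ (A ⊗[ℂ] L) where
  lie_smul c x y := by
    rw [← algebraMap_smul A c y, lie_smul, algebraMap_smul]

/-- The universal enveloping algebra `U(L ⊗ A)` of the map algebra `L ⊗ A`
(realized as `A ⊗[ℂ] L` with bracket `[a ⊗ z, b ⊗ z'] = ab ⊗ [z,z']`). -/
abbrev UEA (A : Type*) [CommRing A] [Algebra ℂ A]
    (L : Type*) [LieRing L] [LieAlgebra ℂ L] : Type _ :=
  UniversalEnvelopingAlgebra ℂ (A ⊗[ℂ] L)

/-- The element `v ⊗ a` of the map algebra, viewed inside `U(L ⊗ A)`. -/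
def el (a : A) (v : L) : UEA A L :=
  UniversalEnvelopingAlgebra.ι ℂ (a ⊗ₜ[ℂ] v)

lemma commute_el (a b : A) (v : L) : Commute (el a v : UEA A L) (el b v) := by
  letI : LieRing (UEA A L) := LieRing.ofAssociativeRing
  letI : LieAlgebra ℂ (UEA A L) := LieAlgebra.ofAssociativeAlgebra
  have h := (UniversalEnvelopingAlgebra.ι ℂ).map_lie (a ⊗ₜ[ℂ] v) (b ⊗ₜ[ℂ] v)
  rw [LieAlgebra.ExtendScalars.bracket_tmul, lie_self, TensorProduct.tmul_zero, map_zero,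
    Ring.lie_def] at h
  exact (sub_eq_zero.mp h.symm)

lemma commute_dp {S : Type*} [Ring S] [Algebra ℂ S] {u w : S} (h : Commute u w)
    (r s : ℕ) : Commute (dp u r) (dp w s) :=
  ((h.pow_pow r s).smul_left _).smul_right _

/-- `x^±(ψ) = ∏_a (x^± ⊗ a)^{(ψ(a))}` (generic in the element `v` of `L`);
the factors pairwise commute, so the product is unambiguous. -/
def xProd (v : L) (ψ : A →₀ ℕ) : UEA A L :=
  ψ.support.noncommProd (fun a => dp (el a v) (ψ a))
    (fun a _ b _ _ => commute_dp (commute_el a b v) _ _)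

/-- the predicate characterizing the recursively defined family
`p : F × F → U(L ⊗ A)` (relative to a choice `v` playing the role of `h`). -/
def IsP (v : L) (p : (A →₀ ℕ) → (A →₀ ℕ) → UEA A L) : Prop :=
  p 0 0 = 1 ∧
  (∀ φ χ, wt φ ≠ wt χ → p φ χ = 0) ∧
  (∀ φ χ, φ ≠ 0 → χ ≠ 0 → wt φ = wt χ →
    p φ χ = -((wt φ : ℂ)⁻¹) •
      ∑ ψ₁ ∈ (Finset.Iic φ).erase 0, ∑ ψ₂ ∈ (Finset.Iic χ).erase 0,
        ((mF ψ₁ * mF ψ₂ : ℕ) : ℂ) • (el (piF ψ₁ * piF ψ₂) v * p (φ - ψ₁) (χ - ψ₂)))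

/-- `p(χ) = p(χ, |χ|·χ₁)`. -/
def pOne (p : (A →₀ ℕ) → (A →₀ ℕ) → UEA A L) (χ : A →₀ ℕ) : UEA A L :=
  p χ (Finsupp.single (1 : A) (wt χ))

/-- the predicate characterizing the recursively defined family
`D^± : F³ → U(L ⊗ A)` (relative to a choice `v` playing the role of `x^±`). -/
def IsD (v : L) (D : (A →₀ ℕ) → (A →₀ ℕ) → (A →₀ ℕ) → UEA A L) : Prop :=
  (D 0 0 0 = 1) ∧
  (∀ ψ₁ ψ₂ : A →₀ ℕ, ¬(ψ₁ = 0 ∧ ψ₂ = 0) → D ψ₁ ψ₂ 0 = 0) ∧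
  (∀ (ψ₁ ψ₂ : A →₀ ℕ) (b : A), D ψ₁ ψ₂ (Finsupp.single b 1) =
      if wt ψ₁ = wt ψ₂ then ((mF ψ₁ * mF ψ₂ : ℕ) : ℂ) • el (b * (piF ψ₁ * piF ψ₂)) v
      else 0) ∧
  (∀ ψ₁ ψ₂ ψ₃ : A →₀ ℕ, 2 ≤ wt ψ₃ →
    D ψ₁ ψ₂ ψ₃ = (wt ψ₃ : ℂ)⁻¹ •
      ∑ φ₁ ∈ Finset.Iic ψ₁, ∑ φ₂ ∈ Finset.Iic ψ₂, ∑ b ∈ ψ₃.support,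
        D φ₁ φ₂ (Finsupp.single b 1) *
          D (ψ₁ - φ₁) (ψ₂ - φ₂) (ψ₃ - Finsupp.single b 1))

/-- `𝔻(ψ₁,ψ₂,ψ₃) = Σ_{φ₁≤ψ₁} Σ_{φ₂≤ψ₂} p(φ₁,φ₂) D⁺(ψ₁−φ₁,ψ₂−φ₂,ψ₃)`. -/
def DD (p : (A →₀ ℕ) → (A →₀ ℕ) → UEA A L)
    (Dp : (A →₀ ℕ) → (A →₀ ℕ) → (A →₀ ℕ) → UEA A L)
    (ψ₁ ψ₂ ψ₃ : A →₀ ℕ) : UEA A L :=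
  ∑ φ₁ ∈ Finset.Iic ψ₁, ∑ φ₂ ∈ Finset.Iic ψ₂,
    p φ₁ φ₂ * Dp (ψ₁ - φ₁) (ψ₂ - φ₂) ψ₃

/-- the Lie algebra `sl₂` presented by a basis `x⁻ = b 0`, `h = b 1`, `x⁺ = b 2`
with `[h,x^±] = ±2x^±`, `[x⁺,x⁻] = h`. -/
structure Sl2Data (L : Type*) [LieRing L] [LieAlgebra ℂ L] where
  b : Module.Basis (Fin 3) ℂ L
  lie_h_xp : ⁅b 1, b 2⁆ = (2 : ℂ) • b 2
  lie_h_xm : ⁅b 1, b 0⁆ = (-2 : ℂ) • b 0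
  lie_xp_xm : ⁅b 2, b 0⁆ = b 1

/-- `x⁻`. -/
def Sl2Data.xm (S : Sl2Data L) : L := S.b 0
/-- `h`. -/
def Sl2Data.h (S : Sl2Data L) : L := S.b 1
/-- `x⁺`. -/
def Sl2Data.xp (S : Sl2Data L) : L := S.b 2

/-- The data of a root system and Chevalley basis for a (finite-dimensional simple)
complex Lie algebra `g`: a Cartan subalgebra `H`, the roots `R`, the positive roots
`Rpos` enumerated as `β 0, …, β (m-1)`, simple roots `α 0, …, α (n-1)`, root vectors
`x s γ` (`s = true` for `x_γ⁺`, `s = false` for `x_γ⁻`), coroots, integral Cartan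
pairing, and structure constants `±(p+1)`. -/
structure ChevalleyData (g : Type*) [LieRing g] [LieAlgebra ℂ g] where
  n : ℕ
  m : ℕ
  H : LieSubalgebra ℂ g
  cartan : H.IsCartanSubalgebra
  R : Set (Module.Dual ℂ H)
  Rpos : Set (Module.Dual ℂ H)
  β : Fin m → Module.Dual ℂ H
  β_inj : Function.Injective β
  Rpos_eq : Rpos = Set.range β
  α : Fin n → Module.Dual ℂ H
  α_mem : ∀ i, α i ∈ Rpos
  R_eq : R = Rpos ∪ (fun γ => -γ) '' Rpos
  x : Bool → Module.Dual ℂ H → g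
  coroot : Module.Dual ℂ H → H
  chevBasis : Module.Basis ((Fin m × Bool) ⊕ Fin n) ℂ g
  chevBasis_x : ∀ (k : Fin m) (s : Bool), chevBasis (Sum.inl (k, s)) = x s (β k)
  chevBasis_h : ∀ i : Fin n, chevBasis (Sum.inr i) = (coroot (α i) : g)
  rootvec_pos : ∀ γ ∈ Rpos, ∀ t : H, ⁅(t : g), x true γ⁆ = γ t • x true γ
  rootvec_neg : ∀ γ ∈ Rpos, ∀ t : H, ⁅(t : g), x false γ⁆ = -(γ t) • x false γ
  coroot_def : ∀ γ ∈ Rpos, ⁅x true γ, x false γ⁆ = (coroot γ : g)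
  pairing : Module.Dual ℂ H → Module.Dual ℂ H → ℤ
  pairing_eq : ∀ γ ∈ Rpos, ∀ δ ∈ R, δ (coroot γ) = (pairing γ δ : ℂ)
  pairing_self : ∀ γ ∈ Rpos, pairing γ γ = 2
  struct : ∀ γ δ, γ ∈ Rpos → δ ∈ Rpos → γ + δ ∈ R → ∃ (c : ℤ) (pm : ℕ),
    (δ - (pm : ℤ) • γ ∈ R) ∧ (∀ q : ℕ, δ - (q : ℤ) • γ ∈ R → q ≤ pm) ∧
    (c = pm + 1 ∨ c = -(pm + 1)) ∧
    ⁅x true γ, x true δ⁆ = (c : ℂ) • x true (γ + δ) ∧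
    ⁅x false γ, x false δ⁆ = (-c : ℂ) • x false (γ + δ)

/-- `ψ ∈ F(𝔹)`: the multiset `ψ` is supported on the basis `𝔹 = range bA` of `A`. -/
def SuppB {ιA : Type*} (bA : Module.Basis ιA ℂ A) (ψ : A →₀ ℕ) : Prop :=
  ∀ a ∈ ψ.support, a ∈ Set.range bA

variable {g : Type*} [LieRing g] [LieAlgebra ℂ g]

/-- The integral form `U_ℤ(g ⊗ A)`: the `ℤ`-subalgebra of `U(g ⊗ A)` generated by all
divided powers `(x_α^± ⊗ b)^{(r)}`, `α ∈ R⁺`, `b ∈ 𝔹`, `r ∈ ℕ`. -/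
def UZ (C : ChevalleyData g) {ιA : Type*} (bA : Module.Basis ιA ℂ A) : Subalgebra ℤ (UEA A g) :=
  Algebra.adjoin ℤ {u : UEA A g | ∃ (k : Fin C.m) (s : Bool) (i : ιA) (r : ℕ),
    u = dp (el (bA i) (C.x s (C.β k))) r}

/-- `U_ℤ^±(g ⊗ A)` (one sign `s` only). -/
def UZpm (C : ChevalleyData g) {ιA : Type*} (bA : Module.Basis ιA ℂ A) (s : Bool) :
    Subalgebra ℤ (UEA A g) :=
  Algebra.adjoin ℤ {u : UEA A g | ∃ (k : Fin C.m) (i : ιA) (r : ℕ),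
    u = dp (el (bA i) (C.x s (C.β k))) r}


/-- generalized binomial coefficient `C(z,k) = z(z-1)⋯(z-k+1)/k!` (as a complex scalar). -/
def cchoose (z : ℂ) (k : ℕ) : ℂ :=
  (k.factorial : ℂ)⁻¹ * ∏ j ∈ Finset.range k, (z - (j : ℂ))

/-- the (finite) set `P_k(ψ)` of partitions of `ψ` into `k` parts,
i.e. finitely supported `χ : F → ℕ` with `Σ_φ χ(φ)·φ = ψ` and `Σ_φ χ(φ) = k`. -/
def partitions (ψ : A →₀ ℕ) (k : ℕ) : Finset ((A →₀ ℕ) →₀ ℕ) :=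
  (Finset.Iic ((Finset.Iic ψ).sum fun φ => Finsupp.single φ k)).filter
    (fun χ => (χ.sum fun φ c => c • φ) = ψ ∧ (χ.sum fun _ c => c) = k)

/-- the (finite) set `S_k(χ)` of finitely supported `ψ : F → ℕ` with
`Σ_φ ψ(φ)·φ ≤ χ` and `Σ_φ ψ(φ) = k`. -/
def subPartitions (χ : A →₀ ℕ) (k : ℕ) : Finset ((A →₀ ℕ) →₀ ℕ) :=
  (Finset.Iic ((Finset.Iic χ).sum fun φ => Finsupp.single φ k)).filter
    (fun ψ => (ψ.sum fun φ c => c • φ) ≤ χ ∧ (ψ.sum fun _ c => c) = k)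

/-- `U_ℤ^0(g ⊗ A)`: the `ℤ`-subalgebra generated by the `p_i(χ)`, `χ ∈ F(𝔹)`,
where `P i` is the family `p_i` (defined by recursion relative to `h_{α_i}`). -/
def UZ0 (C : ChevalleyData g) {ιA : Type*} (bA : Module.Basis ιA ℂ A)
    (P : Fin C.n → (A →₀ ℕ) → (A →₀ ℕ) → UEA A g) : Subalgebra ℤ (UEA A g) :=
  Algebra.adjoin ℤ {u : UEA A g | ∃ (i : Fin C.n) (χ : A →₀ ℕ), SuppB bA χ ∧ u = pOne (P i) χ}

section AuxLemmas

variable (v : L)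

/-- span of products of at most `n` generators `el a v`. -/
def Qs (n : ℕ) : Submodule ℂ (UEA A L) :=
  Submodule.span ℂ {u : UEA A L | ∃ l : List A, l.length ≤ n ∧
    u = (l.map fun a => el a v).prod}

/-- span of products of fewer than `n` generators `el a v`. -/
def Ms (n : ℕ) : Submodule ℂ (UEA A L) :=
  Submodule.span ℂ {u : UEA A L | ∃ l : List A, l.length < n ∧
    u = (l.map fun a => el a v).prod}

variable {v}

lemma wt_def (ψ : A →₀ ℕ) : wt ψ = ∑ a ∈ ψ.support, ψ a := rfl

lemma wt_single (a : A) (n : ℕ) : wt (Finsupp.single a n) = n := by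
  classical
  simp [wt, Finsupp.sum_single_index]

lemma wt_zero : wt (0 : A →₀ ℕ) = 0 := by simp [wt]

lemma wt_eq_zero {ψ : A →₀ ℕ} : wt ψ = 0 ↔ ψ = 0 := by
  rw [show wt ψ = ψ.degree from rfl]
  exact Finsupp.degree_eq_zero_iff ψ

lemma wt_add (φ ψ : A →₀ ℕ) : wt (φ + ψ) = wt φ + wt ψ :=
  Finsupp.sum_add_index' (fun _ => rfl) (fun _ _ _ => rfl)

lemma le_wt (ψ : A →₀ ℕ) (a : A) : ψ a ≤ wt ψ :=
  Finsupp.le_degree a ψ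

lemma wt_mono {ψ χ : A →₀ ℕ} (h : ψ ≤ χ) : wt ψ ≤ wt χ := by
  have h1 : ψ + (χ - ψ) = χ := add_tsub_cancel_of_le h
  have := wt_add ψ (χ - ψ)
  rw [h1] at this
  omega

lemma wt_tsub {ψ χ : A →₀ ℕ} (h : ψ ≤ χ) : wt (χ - ψ) = wt χ - wt ψ := by
  have h1 : ψ + (χ - ψ) = χ := add_tsub_cancel_of_le h
  have := wt_add ψ (χ - ψ)
  rw [h1] at this
  omega

lemma eq_single_of_wt_eq_one {ψ : A →₀ ℕ} (h : wt ψ = 1) :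
    ∃ a, ψ = Finsupp.single a 1 := by
  classical
  have hne : ψ ≠ 0 := by
    intro h0; rw [h0, wt_zero] at h; omega
  obtain ⟨a, ha⟩ := Finsupp.ne_iff.mp hne
  simp only [Finsupp.coe_zero, Pi.zero_apply] at ha
  have h1 : 1 ≤ ψ a := Nat.one_le_iff_ne_zero.mpr ha
  have hle : Finsupp.single a 1 ≤ ψ := Finsupp.single_le_iff.mpr h1
  have hzero : wt (ψ - Finsupp.single a 1) = 0 := by
    rw [wt_tsub hle, wt_single, h]
  refine ⟨a, le_antisymm ?_ hle⟩
  have := wt_eq_zero.mp hzero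
  exact tsub_eq_zero_iff_le.mp this

lemma mF_single (a : A) (n : ℕ) : mF (Finsupp.single a n) = 1 := by
  classical
  rw [mF, Finsupp.multinomial, Finsupp.sum_single_index rfl,
    Finsupp.prod_single_index (by norm_num)]
  exact Nat.div_self n.factorial_pos

lemma piF_single (a : A) (n : ℕ) : piF (Finsupp.single a n) = a ^ n := by
  classical
  rw [piF, Finsupp.prod_single_index (pow_zero a)]

lemma one_mem_Qs (n : ℕ) : (1 : UEA A L) ∈ Qs v n :=
  Submodule.subset_span ⟨[], by simp, by simp⟩

lemma el_mem_Qs (a : A) : el a v ∈ Qs v 1 :=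
  Submodule.subset_span ⟨[a], by simp, by simp⟩

lemma Qs_mono {m n : ℕ} (h : m ≤ n) : Qs (A := A) v m ≤ Qs v n :=
  Submodule.span_mono fun u ⟨l, hl, hu⟩ => ⟨l, hl.trans h, hu⟩

lemma Ms_le_Qs {m n : ℕ} (h : n ≤ m + 1) : Ms (A := A) v n ≤ Qs v m :=
  Submodule.span_mono fun u ⟨l, hl, hu⟩ => ⟨l, by omega, hu⟩

lemma Qs_le_Ms {m n : ℕ} (h : m < n) : Qs (A := A) v m ≤ Ms v n :=
  Submodule.span_mono fun u ⟨l, hl, hu⟩ => ⟨l, by omega, hu⟩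

lemma mul_mem_Qs {x y : UEA A L} {m n : ℕ} (hx : x ∈ Qs v m) (hy : y ∈ Qs v n) :
    x * y ∈ Qs v (m + n) := by
  have h := Submodule.mul_mem_mul hx hy
  rw [Qs, Qs, Submodule.span_mul_span] at h
  refine Submodule.span_le.mpr ?_ h
  rintro u ⟨u₁, ⟨l₁, hl₁, rfl⟩, u₂, ⟨l₂, hl₂, rfl⟩, rfl⟩
  exact Submodule.subset_span ⟨l₁ ++ l₂, by simp; omega, by simp⟩

lemma mul_mem_Ms {x y : UEA A L} {m n : ℕ} (hx : x ∈ Qs v m) (hy : y ∈ Ms v n) :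
    x * y ∈ Ms v (m + n) := by
  have h := Submodule.mul_mem_mul hx hy
  rw [Qs, Ms, Submodule.span_mul_span] at h
  refine Submodule.span_le.mpr ?_ h
  rintro u ⟨u₁, ⟨l₁, hl₁, rfl⟩, u₂, ⟨l₂, hl₂, rfl⟩, rfl⟩
  exact Submodule.subset_span ⟨l₁ ++ l₂, by simp; omega, by simp⟩

lemma pow_mem_Qs (a : A) (r : ℕ) : (el a v) ^ r ∈ Qs v r :=
  Submodule.subset_span ⟨List.replicate r a, by simp, by simp⟩

lemma dp_mem_Qs (a : A) (r : ℕ) : dp (el a v) r ∈ Qs v r :=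
  Submodule.smul_mem _ _ (pow_mem_Qs a r)

lemma dp_zero {S : Type*} [Ring S] [Algebra ℂ S] (u : S) : dp u 0 = 1 := by
  simp [dp]

lemma noncommProd_mem_Qs (ψ : A →₀ ℕ) (s : Finset A) :
    s.noncommProd (fun a => dp (el a v) (ψ a))
      (fun a _ b _ _ => commute_dp (commute_el a b v) _ _) ∈ Qs v (∑ a ∈ s, ψ a) := by
  classical
  induction s using Finset.induction_on with
  | empty =>
    rw [Finset.sum_empty]
    exact one_mem_Qs 0
  | insert b t hnot ih =>
    rw [Finset.sum_insert hnot]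
    convert mul_mem_Qs (dp_mem_Qs b (ψ b)) ih using 1
    exact Finset.noncommProd_insert_of_notMem _ _ _ _ hnot

lemma xProd_mem_Qs (ψ : A →₀ ℕ) : xProd v ψ ∈ Qs v (wt ψ) :=
  noncommProd_mem_Qs ψ ψ.support

lemma xProd_factor (ψ : A →₀ ℕ) (a : A) :
    xProd v ψ = dp (el a v) (ψ a) *
      (ψ.support.erase a).noncommProd (fun b => dp (el b v) (ψ b))
        (fun a _ b _ _ => commute_dp (commute_el a b v) _ _) := by
  classical
  by_cases ha : a ∈ ψ.support
  · exact (Finset.mul_noncommProd_erase ψ.support ha _ _).symm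
  · rw [Finset.erase_eq_of_notMem ha, Finsupp.notMem_support_iff.mp ha, dp_zero, one_mul]
    rfl

lemma el_mul_dp {S : Type*} [Ring S] [Algebra ℂ S] (u : S) {k : ℕ} (hk : 1 ≤ k) :
    u * dp u (k - 1) = (k : ℂ) • dp u k := by
  obtain ⟨m, rfl⟩ : ∃ m, k = m + 1 := ⟨k - 1, by omega⟩
  simp only [Nat.add_sub_cancel, dp]
  rw [mul_smul_comm, ← pow_succ', smul_smul]
  congr 1
  rw [Nat.factorial_succ]
  push_cast
  have h1 : ((m : ℂ) + 1) ≠ 0 := by exact_mod_cast Nat.succ_ne_zero m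
  have h2 : (m.factorial : ℂ) ≠ 0 := by exact_mod_cast m.factorial_ne_zero
  field_simp

lemma el_mul_xProd (ψ : A →₀ ℕ) {a : A} (ha : a ∈ ψ.support) :
    el a v * xProd v (ψ - Finsupp.single a 1) = (ψ a : ℂ) • xProd v ψ := by
  classical
  set ψ' := ψ - Finsupp.single a 1 with hψ'
  have hval : ∀ b, b ≠ a → ψ' b = ψ b := by
    intro b hb
    rw [hψ', Finsupp.tsub_apply, Finsupp.single_eq_of_ne hb, Nat.sub_zero]
  have ha' : ψ' a = ψ a - 1 := by
    rw [hψ', Finsupp.tsub_apply, Finsupp.single_eq_same]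
  have hsupp : ψ'.support.erase a = ψ.support.erase a := by
    ext b
    simp only [Finset.mem_erase, Finsupp.mem_support_iff]
    constructor
    · rintro ⟨hb, h2⟩; rw [hval b hb] at h2; exact ⟨hb, h2⟩
    · rintro ⟨hb, h2⟩; rw [hval b hb]; exact ⟨hb, h2⟩
  have hnc : (ψ'.support.erase a).noncommProd (fun b => dp (el b v) (ψ' b))
      (fun a _ b _ _ => commute_dp (commute_el a b v) _ _) =
      (ψ.support.erase a).noncommProd (fun b => dp (el b v) (ψ b))
      (fun a _ b _ _ => commute_dp (commute_el a b v) _ _) :=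
    Finset.noncommProd_congr hsupp (fun b hb => by
      rw [hval b (Finset.mem_erase.mp (hsupp ▸ hb)).1]) _
  rw [xProd_factor ψ' a, xProd_factor ψ a,
    hnc,
    ← mul_assoc, ha', el_mul_dp (el a v) (Nat.one_le_iff_ne_zero.mpr
      (Finsupp.mem_support_iff.mp ha)), smul_mul_assoc]

end AuxLemmas

lemma inner_sum (v : L) (p : (A →₀ ℕ) → (A →₀ ℕ) → UEA A L)
    (hp0 : ∀ φ χ, wt φ ≠ wt χ → p φ χ = 0)
    {χ ψ₁ : A →₀ ℕ} {N : ℕ} (hχ : wt χ = N)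
    (hψle : ψ₁ ≤ χ) (hψne : ψ₁ ≠ 0) :
    ∑ ψ₂ ∈ (Finset.Iic (Finsupp.single (1 : A) N)).erase 0,
      ((mF ψ₁ * mF ψ₂ : ℕ) : ℂ) •
        (el (piF ψ₁ * piF ψ₂) v * p (χ - ψ₁) (Finsupp.single 1 N - ψ₂))
    = (mF ψ₁ : ℂ) • (el (piF ψ₁) v * pOne p (χ - ψ₁)) := by
  classical
  set j := wt ψ₁ with hj
  have hj1 : 1 ≤ j := by
    rcases Nat.eq_zero_or_pos j with h | h
    · exact absurd (wt_eq_zero.mp (hj ▸ h)) hψne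
    · exact h
  have hjN : j ≤ N := hχ ▸ wt_mono hψle
  have hwt' : wt (χ - ψ₁) = N - j := by rw [wt_tsub hψle, hχ]
  rw [Finset.sum_eq_single_of_mem (Finsupp.single (1 : A) j)]
  · rw [mF_single, piF_single, one_pow, mul_one, mul_one,
      (Finsupp.single_tsub (i := (1 : A)) (a := N) (b := j)).symm]
    rw [show pOne p (χ - ψ₁) = p (χ - ψ₁) (Finsupp.single 1 (wt (χ - ψ₁))) from rfl, hwt']
  · rw [Finset.mem_erase, Finset.mem_Iic]
    refine ⟨?_, Finsupp.single_le_iff.mpr (by rw [Finsupp.single_eq_same]; exact hjN)⟩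
    simp only [ne_eq, Finsupp.single_eq_zero]
    omega
  · intro ψ₂ hmem hne
    rw [Finset.mem_erase, Finset.mem_Iic] at hmem
    obtain ⟨hne0, hle⟩ := hmem
    have hval : ∀ b, b ≠ (1 : A) → ψ₂ b = 0 := by
      intro b hb
      have := hle b
      rwa [Finsupp.single_eq_of_ne hb, Nat.le_zero] at this
    have hform : ψ₂ = Finsupp.single 1 (ψ₂ 1) := by
      ext b
      by_cases hb : b = (1 : A)
      · subst hb; rw [Finsupp.single_eq_same]
      · rw [hval b hb, Finsupp.single_eq_of_ne hb]
    set j' := ψ₂ 1 with hj'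
    have hj'N : j' ≤ N := by
      have := hle (1 : A); rwa [Finsupp.single_eq_same] at this
    have hj'j : j' ≠ j := by
      intro h; exact hne (by rw [hform, h])
    have hzero : p (χ - ψ₁) (Finsupp.single 1 N - ψ₂) = 0 := by
      apply hp0
      rw [hwt', hform, ← Finsupp.single_tsub, wt_single]
      omega
    rw [hzero, mul_zero, smul_zero]

/-- `p(χ) = (−1)^{|χ|} ∏_a (h⊗a)^{(χ(a))}` up to a `ℂ`-linear combination
of products of fewer than `|χ|` elements of `{h ⊗ a : a ∈ A}`. -/
theorem p_leading_term (S : Sl2Data L)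
    (p : (A →₀ ℕ) → (A →₀ ℕ) → UEA A L) (hp : IsP S.h p) (χ : A →₀ ℕ) :
    pOne p χ - ((-1 : ℂ) ^ wt χ) • xProd S.h χ ∈ Submodule.span ℂ
      {u : UEA A L | ∃ l : List A, l.length < wt χ ∧
        u = (l.map fun a => el a S.h).prod} := by
  classical
  suffices h : ∀ (N : ℕ) (χ : A →₀ ℕ), wt χ = N →
      pOne p χ - ((-1 : ℂ) ^ N) • xProd S.h χ ∈ Ms S.h N from h (wt χ) χ rfl
  intro N
  induction N using Nat.strong_induction_on with
  | _ N IH =>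
  intro χ hχ
  have hQ : ∀ φ : A →₀ ℕ, wt φ < N → pOne p φ ∈ Qs S.h (wt φ) := by
    intro φ hφ
    have h1 := IH (wt φ) hφ φ rfl
    have h2 : pOne p φ = (pOne p φ - (-1 : ℂ) ^ (wt φ) • xProd S.h φ)
        + (-1 : ℂ) ^ (wt φ) • xProd S.h φ := (sub_add_cancel _ _).symm
    rw [h2]
    exact Submodule.add_mem _ (Ms_le_Qs (Nat.le_succ _) h1)
      (Submodule.smul_mem _ _ (xProd_mem_Qs φ))
  rcases Nat.eq_zero_or_pos N with hN0 | hN1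
  · subst hN0
    have hχ0 : χ = 0 := wt_eq_zero.mp hχ
    subst hχ0
    have h1 : pOne p (0 : A →₀ ℕ) = 1 := by
      rw [show pOne p (0 : A →₀ ℕ) = p 0 (Finsupp.single 1 (wt (0 : A →₀ ℕ))) from rfl,
        wt_zero, Finsupp.single_zero]
      exact hp.1
    have h2 : xProd S.h (0 : A →₀ ℕ) = 1 := by
      rw [xProd]; simp
    rw [h1, h2, pow_zero, one_smul, sub_self]
    exact Submodule.zero_mem _
  obtain ⟨M, rfl⟩ : ∃ M, N = M + 1 := ⟨N - 1, by omega⟩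
  have hχ0 : χ ≠ 0 := fun h => by rw [h, wt_zero] at hχ; omega
  have hNC : ((M + 1 : ℕ) : ℂ) ≠ 0 := by exact_mod_cast Nat.succ_ne_zero M
  have hrec := hp.2.2 χ (Finsupp.single (1 : A) (M + 1)) hχ0
    (by simp) (by rw [hχ, wt_single])
  rw [hχ] at hrec
  have hcol : ∀ ψ₁ ∈ (Finset.Iic χ).erase 0,
      (∑ ψ₂ ∈ (Finset.Iic (Finsupp.single (1 : A) (M + 1))).erase 0,
        ((mF ψ₁ * mF ψ₂ : ℕ) : ℂ) •
          (el (piF ψ₁ * piF ψ₂) S.h * p (χ - ψ₁) (Finsupp.single 1 (M + 1) - ψ₂)))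
      = (mF ψ₁ : ℂ) • (el (piF ψ₁) S.h * pOne p (χ - ψ₁)) := by
    intro ψ₁ hm
    rw [Finset.mem_erase, Finset.mem_Iic] at hm
    exact inner_sum S.h p hp.2.1 hχ hm.2 hm.1
  rw [Finset.sum_congr rfl hcol] at hrec
  have hpOne : pOne p χ = -((M + 1 : ℕ) : ℂ)⁻¹ •
      ∑ ψ₁ ∈ (Finset.Iic χ).erase 0,
        (mF ψ₁ : ℂ) • (el (piF ψ₁) S.h * pOne p (χ - ψ₁)) := by
    rw [show pOne p χ = p χ (Finsupp.single 1 (wt χ)) from rfl, hχ]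
    exact_mod_cast hrec
  set T := ∑ ψ₁ ∈ (Finset.Iic χ).erase 0,
      (mF ψ₁ : ℂ) • (el (piF ψ₁) S.h * pOne p (χ - ψ₁)) with hT
  -- split off the weight-one part
  have hsplit : T = (∑ ψ₁ ∈ ((Finset.Iic χ).erase 0).filter (fun ψ => wt ψ = 1),
        (mF ψ₁ : ℂ) • (el (piF ψ₁) S.h * pOne p (χ - ψ₁)))
      + ∑ ψ₁ ∈ ((Finset.Iic χ).erase 0).filter (fun ψ => ¬ wt ψ = 1),
        (mF ψ₁ : ℂ) • (el (piF ψ₁) S.h * pOne p (χ - ψ₁)) :=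
    (Finset.sum_filter_add_sum_filter_not _ _ _).symm
  have himg : ((Finset.Iic χ).erase 0).filter (fun ψ => wt ψ = 1)
      = χ.support.image (fun a => Finsupp.single a 1) := by
    ext ψ
    simp only [Finset.mem_filter, Finset.mem_erase, Finset.mem_Iic, Finset.mem_image,
      Finsupp.mem_support_iff]
    constructor
    · rintro ⟨⟨hne, hle⟩, hwt⟩
      obtain ⟨a, rfl⟩ := eq_single_of_wt_eq_one hwt
      refine ⟨a, ?_, rfl⟩
      have h1 := Finsupp.single_le_iff.mp hle
      omega
    · rintro ⟨a, ha, rfl⟩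
      refine ⟨⟨by simp, Finsupp.single_le_iff.mpr (Nat.one_le_iff_ne_zero.mpr ha)⟩,
        wt_single a 1⟩
  have hSf : (∑ ψ₁ ∈ ((Finset.Iic χ).erase 0).filter (fun ψ => wt ψ = 1),
        (mF ψ₁ : ℂ) • (el (piF ψ₁) S.h * pOne p (χ - ψ₁)))
      = ∑ a ∈ χ.support, el a S.h * pOne p (χ - Finsupp.single a 1) := by
    rw [himg, Finset.sum_image
      (fun a _ b _ h => Finsupp.single_left_injective one_ne_zero h)]
    refine Finset.sum_congr rfl fun a _ => ?_
    rw [mF_single, piF_single, pow_one, Nat.cast_one, one_smul]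
  -- per-element decomposition on the support
  have hterm : ∀ a ∈ χ.support, el a S.h * pOne p (χ - Finsupp.single a 1)
      = el a S.h * (pOne p (χ - Finsupp.single a 1)
          - (-1 : ℂ) ^ M • xProd S.h (χ - Finsupp.single a 1))
        + ((-1 : ℂ) ^ M * (χ a : ℂ)) • xProd S.h χ := by
    intro a ha
    have hx : pOne p (χ - Finsupp.single a 1)
        = (pOne p (χ - Finsupp.single a 1)
            - (-1 : ℂ) ^ M • xProd S.h (χ - Finsupp.single a 1))
          + (-1 : ℂ) ^ M • xProd S.h (χ - Finsupp.single a 1) := (sub_add_cancel _ _).symm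
    conv_lhs => rw [hx]
    rw [mul_add, mul_smul_comm, el_mul_xProd χ ha, smul_smul]
  have hSf2 : (∑ a ∈ χ.support, el a S.h * pOne p (χ - Finsupp.single a 1))
      = (∑ a ∈ χ.support, el a S.h * (pOne p (χ - Finsupp.single a 1)
          - (-1 : ℂ) ^ M • xProd S.h (χ - Finsupp.single a 1)))
        + ((-1 : ℂ) ^ M * ((M + 1 : ℕ) : ℂ)) • xProd S.h χ := by
    rw [Finset.sum_congr rfl hterm, Finset.sum_add_distrib, ← Finset.sum_smul]
    congr 2
    rw [← Finset.mul_sum]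
    congr 1
    rw [← Nat.cast_sum, ← wt_def, hχ]
  set E₁ := ∑ a ∈ χ.support, el a S.h * (pOne p (χ - Finsupp.single a 1)
      - (-1 : ℂ) ^ M • xProd S.h (χ - Finsupp.single a 1)) with hE₁
  set E₂ := ∑ ψ₁ ∈ ((Finset.Iic χ).erase 0).filter (fun ψ => ¬ wt ψ = 1),
      (mF ψ₁ : ℂ) • (el (piF ψ₁) S.h * pOne p (χ - ψ₁)) with hE₂
  have hT_eq : T = (E₁ + E₂) + ((-1 : ℂ) ^ M * ((M + 1 : ℕ) : ℂ)) • xProd S.h χ := by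
    rw [hsplit, hSf, hSf2]; abel
  -- memberships
  have hE₁mem : E₁ ∈ Ms S.h (M + 1) := by
    refine Submodule.sum_mem _ fun a ha => ?_
    have hlea : Finsupp.single a 1 ≤ χ :=
      Finsupp.single_le_iff.mpr (Nat.one_le_iff_ne_zero.mpr (Finsupp.mem_support_iff.mp ha))
    have hwta : wt (χ - Finsupp.single a 1) = M := by
      rw [wt_tsub hlea, wt_single, hχ]
      omega
    have hIHa := IH M (Nat.lt_succ_self M) (χ - Finsupp.single a 1) hwta
    have := mul_mem_Ms (el_mem_Qs a) hIHa
    rwa [Nat.add_comm 1 M] at this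
  have hE₂mem : E₂ ∈ Ms S.h (M + 1) := by
    refine Submodule.sum_mem _ fun ψ₁ hψ₁ => ?_
    rw [Finset.mem_filter, Finset.mem_erase, Finset.mem_Iic] at hψ₁
    obtain ⟨⟨hne, hle⟩, hwt1⟩ := hψ₁
    have hj1 : 1 ≤ wt ψ₁ := Nat.one_le_iff_ne_zero.mpr (fun h => hne (wt_eq_zero.mp h))
    have hj2 : 2 ≤ wt ψ₁ := by omega
    have hjle : wt ψ₁ ≤ M + 1 := hχ ▸ wt_mono hle
    have hwt' : wt (χ - ψ₁) = M + 1 - wt ψ₁ := by rw [wt_tsub hle, hχ]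
    have hmem : pOne p (χ - ψ₁) ∈ Qs S.h (wt (χ - ψ₁)) := hQ _ (by omega)
    refine Submodule.smul_mem _ _ ?_
    have := mul_mem_Qs (el_mem_Qs (piF ψ₁)) hmem
    exact Qs_le_Ms (by omega) this
  -- assemble
  have hscalar : -((M + 1 : ℕ) : ℂ)⁻¹ * ((-1 : ℂ) ^ M * ((M + 1 : ℕ) : ℂ))
      = -((-1 : ℂ) ^ M) := by
    have h1 : ((M : ℂ) + 1) ≠ 0 := by exact_mod_cast Nat.succ_ne_zero M
    push_cast
    field_simp
  have hfinal : pOne p χ - ((-1 : ℂ) ^ (M + 1)) • xProd S.h χ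
      = -((M + 1 : ℕ) : ℂ)⁻¹ • (E₁ + E₂) := by
    rw [hpOne, hT_eq, smul_add, smul_smul, hscalar, pow_succ]
    rw [show ((-1 : ℂ) ^ M * -1) = -((-1 : ℂ) ^ M) by ring]
    exact add_sub_cancel_right _ _
  rw [hfinal]
  exact Submodule.smul_mem _ _ (Submodule.add_mem _ hE₁mem hE₂mem)

end MapAlgebra
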